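/- Let t0 be a real number, let g : [t0,∞) → [0,∞) be a monotone (either non-increasing or non-decreasing) function of class C¹, and set G(t) = ∫_{t0}^t g(τ) dτ. Then for every interval [α,β] ⊆ [t0,∞) and every real number ℓ > 0 it turns out that ∫_α^β g(τ)·sin²(ℓτ) dτ ≥ (1/2)(G(β) − G(α)) − (1/ℓ)·max{ g(α), g(β) }. -/

import Mathlib

open Real Set MeasureTheory Topology

theorem oscillating_integral_estimate
    (t0 : ℝ) (g g' : ℝ → ℝ)
    (hg_nonneg : ∀ t ∈ Ici t0, 0 ≤ g t)
    (hg_mono : MonotoneOn g (Ici t0) ∨ AntitoneOn g (Ici t0))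
    (hg1 : ∀ t ∈ Ici t0, HasDerivWithinAt g (g' t) (Ici t0) t)
    (hg1cont : ContinuousOn g' (Ici t0)) :
    ∀ α β ℓ : ℝ, t0 ≤ α → α ≤ β → 0 < ℓ →
      (1 / 2) * ((∫ τ in t0..β, g τ) - ∫ τ in t0..α, g τ) -
          (1 / ℓ) * max (g α) (g β) ≤
        ∫ τ in α..β, g τ * (Real.sin (ℓ * τ)) ^ 2 := by
  intro α β ℓ hα hαβ hℓ
  have hℓ2 : (0:ℝ) < 2 * ℓ := by linarith
  have hgc : ContinuousOn g (Ici t0) := fun x hx => (hg1 x hx).continuousWithinAt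
  have hsub : Icc α β ⊆ Ici t0 := fun x hx => le_trans hα hx.1
  have hαt : α ∈ Ici t0 := hα
  have hβt : β ∈ Ici t0 := le_trans hα hαβ
  have hgα : 0 ≤ g α := hg_nonneg α hαt
  have hgβ : 0 ≤ g β := hg_nonneg β hβt
  -- interior derivative
  have hderiv : ∀ x ∈ Ioo α β, HasDerivAt g (g' x) x := by
    intro x hx
    have hx0 : t0 < x := lt_of_le_of_lt hα hx.1
    exact (hg1 x hx0.le).hasDerivAt (Ici_mem_nhds hx0)
  -- integrability facts
  have hg'cont : ContinuousOn g' (Icc α β) := hg1cont.mono hsub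
  have hgcont : ContinuousOn g (Icc α β) := hgc.mono hsub
  have hg'int : IntervalIntegrable g' volume α β :=
    hg'cont.intervalIntegrable_of_Icc hαβ
  -- FTC for g'
  have hFTCg : ∫ x in α..β, g' x = g β - g α :=
    intervalIntegral.integral_eq_sub_of_hasDeriv_right_of_le hαβ hgcont
      (fun x hx => (hderiv x hx).hasDerivWithinAt) hg'int
  -- derivative of the antiderivative of cos(2ℓτ)
  have hv : ∀ x : ℝ, HasDerivAt (fun τ => Real.sin (2*ℓ*τ) / (2*ℓ)) (Real.cos (2*ℓ*x)) x := by
    intro x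
    have h1 : HasDerivAt (fun τ : ℝ => 2*ℓ*τ) (2*ℓ) x := by
      simpa using (hasDerivAt_id x).const_mul (2*ℓ)
    have h2 := ((Real.hasDerivAt_sin (2*ℓ*x)).comp x h1).div_const (2*ℓ)
    convert h2 using 1
    · rfl
    · rfl
    · rfl
    · exact (mul_div_cancel_right₀ _ hℓ2.ne').symm
  set v : ℝ → ℝ := fun τ => Real.sin (2*ℓ*τ) / (2*ℓ) with hvdef
  have hprod : ∀ x ∈ Ioo α β,
      HasDerivAt (fun τ => g τ * v τ) (g' x * v x + g x * Real.cos (2*ℓ*x)) x := by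
    intro x hx
    exact (hderiv x hx).mul (hv x)
  have hvcont : Continuous v := by
    apply Continuous.div_const
    exact Real.continuous_sin.comp (by continuity)
  have hint2 : IntervalIntegrable (fun x => g' x * v x + g x * Real.cos (2*ℓ*x)) volume α β := by
    apply ContinuousOn.intervalIntegrable_of_Icc hαβ
    exact (hg'cont.mul hvcont.continuousOn).add
      (hgcont.mul ((Real.continuous_cos.comp (by continuity)).continuousOn))
  have hFTCh : ∫ x in α..β, (g' x * v x + g x * Real.cos (2*ℓ*x))
      = g β * v β - g α * v α :=
    intervalIntegral.integral_eq_sub_of_hasDeriv_right_of_le hαβ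
      (hgcont.mul hvcont.continuousOn)
      (fun x hx => (hprod x hx).hasDerivWithinAt) hint2
  have hint3 : IntervalIntegrable (fun x => g' x * v x) volume α β :=
    ContinuousOn.intervalIntegrable_of_Icc hαβ (hg'cont.mul hvcont.continuousOn)
  have hint4 : IntervalIntegrable (fun x => g x * Real.cos (2*ℓ*x)) volume α β :=
    ContinuousOn.intervalIntegrable_of_Icc hαβ
      (hgcont.mul ((Real.continuous_cos.comp (by continuity)).continuousOn))
  have hsplit : ∫ x in α..β, (g' x * v x + g x * Real.cos (2*ℓ*x))
      = (∫ x in α..β, g' x * v x) + ∫ x in α..β, g x * Real.cos (2*ℓ*x) :=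
    intervalIntegral.integral_add hint3 hint4
  set I : ℝ := ∫ x in α..β, g x * Real.cos (2*ℓ*x) with hIdef
  have hIeq : I = g β * v β - g α * v α - ∫ x in α..β, g' x * v x := by
    rw [hsplit] at hFTCh; linarith
  -- bound |v| ≤ 1/(2ℓ)
  have hvbound : ∀ x : ℝ, |v x| ≤ 1 / (2*ℓ) := by
    intro x
    rw [hvdef]
    simp only
    rw [abs_div, abs_of_pos hℓ2]
    exact div_le_div_of_nonneg_right (Real.abs_sin_le_one _) hℓ2.le
  -- sign of g' and value of ∫ |g'|
  have habsg' : ∫ x in α..β, |g' x| = |g α - g β| := by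
    have hslope : ∀ x ∈ Icc α β, Filter.Tendsto (slope g x) (𝓝[>] x) (𝓝 (g' x)) := by
      intro x hx
      have hxt : x ∈ Ici t0 := hsub hx
      have hd : HasDerivWithinAt g (g' x) (Ioi x) x :=
        (hg1 x hxt).mono (fun y hy => Set.mem_Ici.2 (le_trans (Set.mem_Ici.1 hxt) (le_of_lt hy)))
      have ht := hasDerivWithinAt_iff_tendsto_slope.1 hd
      rwa [Set.diff_singleton_eq_self (notMem_Ioi.2 le_rfl)] at ht
    rcases hg_mono with hm | hm
    · have hsign : ∀ x ∈ Icc α β, 0 ≤ g' x := by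
        intro x hx
        have hxt : x ∈ Ici t0 := hsub hx
        refine ge_of_tendsto (hslope x hx) ?_
        filter_upwards [self_mem_nhdsWithin] with y hy
        have hyt : y ∈ Ici t0 := Set.mem_Ici.2 (le_trans (Set.mem_Ici.1 hxt) (le_of_lt hy))
        rw [slope_def_field]
        exact div_nonneg (sub_nonneg.2 (hm hxt hyt (le_of_lt hy))) (sub_nonneg.2 (le_of_lt hy))
      have : ∫ x in α..β, |g' x| = ∫ x in α..β, g' x := by
        apply intervalIntegral.integral_congr
        intro x hx
        rw [uIcc_of_le hαβ] at hx
        exact abs_of_nonneg (hsign x hx)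
      rw [this, hFTCg, abs_sub_comm, abs_of_nonneg (sub_nonneg.2 (hm hαt hβt hαβ))]
    · have hsign : ∀ x ∈ Icc α β, g' x ≤ 0 := by
        intro x hx
        have hxt : x ∈ Ici t0 := hsub hx
        refine le_of_tendsto (hslope x hx) ?_
        filter_upwards [self_mem_nhdsWithin] with y hy
        have hyt : y ∈ Ici t0 := Set.mem_Ici.2 (le_trans (Set.mem_Ici.1 hxt) (le_of_lt hy))
        rw [slope_def_field]
        exact div_nonpos_of_nonpos_of_nonneg (sub_nonpos.2 (hm hxt hyt (le_of_lt hy)))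
          (sub_nonneg.2 (le_of_lt hy))
      have : ∫ x in α..β, |g' x| = ∫ x in α..β, -g' x := by
        apply intervalIntegral.integral_congr
        intro x hx
        rw [uIcc_of_le hαβ] at hx
        exact abs_of_nonpos (hsign x hx)
      rw [this, intervalIntegral.integral_neg, hFTCg,
        abs_of_nonneg (sub_nonneg.2 (hm hαt hβt hαβ))]
      ring
  -- bound on ∫ g' v
  have habsint : IntervalIntegrable (fun x => |g' x|) volume α β := hg'int.abs
  have hb1 : |∫ x in α..β, g' x * v x| ≤ |g α - g β| / (2*ℓ) := by
    calc |∫ x in α..β, g' x * v x| ≤ ∫ x in α..β, |g' x * v x| :=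
          intervalIntegral.abs_integral_le_integral_abs hαβ
      _ ≤ ∫ x in α..β, |g' x| * (1 / (2*ℓ)) := by
          apply intervalIntegral.integral_mono_on hαβ hint3.abs (habsint.mul_const _)
          intro x _
          rw [abs_mul]
          exact mul_le_mul_of_nonneg_left (hvbound x) (abs_nonneg _)
      _ = |g α - g β| / (2*ℓ) := by
          rw [intervalIntegral.integral_mul_const, habsg']
          ring
  -- bound on I
  have hIbound : |I| ≤ max (g α) (g β) / ℓ := by
    have h1 : |g β * v β| ≤ g β / (2*ℓ) := by
      rw [abs_mul, abs_of_nonneg hgβ]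
      calc g β * |v β| ≤ g β * (1/(2*ℓ)) := mul_le_mul_of_nonneg_left (hvbound β) hgβ
        _ = g β / (2*ℓ) := by ring
    have h2 : |g α * v α| ≤ g α / (2*ℓ) := by
      rw [abs_mul, abs_of_nonneg hgα]
      calc g α * |v α| ≤ g α * (1/(2*ℓ)) := mul_le_mul_of_nonneg_left (hvbound α) hgα
        _ = g α / (2*ℓ) := by ring
    have h3 : |I| ≤ |g β * v β| + |g α * v α| + |∫ x in α..β, g' x * v x| := by
      rw [hIeq]
      calc |g β * v β - g α * v α - ∫ x in α..β, g' x * v x|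
          ≤ |g β * v β - g α * v α| + |∫ x in α..β, g' x * v x| := abs_sub _ _
        _ ≤ |g β * v β| + |g α * v α| + |∫ x in α..β, g' x * v x| := by
            have := abs_sub (g β * v β) (g α * v α)
            linarith
    have hmaxmin : g α + g β + |g α - g β| = 2 * max (g α) (g β) := by
      rcases le_total (g α) (g β) with h | h
      · rw [abs_of_nonpos (sub_nonpos.2 h), max_eq_right h]; ring
      · rw [abs_of_nonneg (sub_nonneg.2 h), max_eq_left h]; ring
    have : |I| ≤ (g α + g β + |g α - g β|) / (2*ℓ) := by
      have := hb1
      have h4 : g β / (2*ℓ) + g α / (2*ℓ) + |g α - g β| / (2*ℓ)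
          = (g α + g β + |g α - g β|) / (2*ℓ) := by ring
      linarith
    rw [hmaxmin] at this
    calc |I| ≤ 2 * max (g α) (g β) / (2*ℓ) := this
      _ = max (g α) (g β) / ℓ := by field_simp
  -- rewrite the target integral
  have hptw : ∀ τ : ℝ, g τ * Real.sin (ℓ * τ) ^ 2
      = (1/2) * g τ - (1/2) * (g τ * Real.cos (2*ℓ*τ)) := by
    intro τ
    rw [Real.sin_sq_eq_half_sub, ← mul_assoc]
    ring
  have hgint : IntervalIntegrable g volume α β :=
    hgcont.intervalIntegrable_of_Icc hαβ
  have hmain : ∫ τ in α..β, g τ * Real.sin (ℓ * τ) ^ 2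
      = (1/2) * (∫ τ in α..β, g τ) - (1/2) * I := by
    rw [hIdef]
    simp_rw [hptw]
    rw [intervalIntegral.integral_sub (hgint.const_mul _) (hint4.const_mul _),
      intervalIntegral.integral_const_mul, intervalIntegral.integral_const_mul]
  -- combine the t0-based integrals
  have hgintβ : IntervalIntegrable g volume t0 β :=
    (hgc.mono (Icc_subset_Ici_self)).intervalIntegrable_of_Icc hβt
  have hgintα : IntervalIntegrable g volume t0 α :=
    (hgc.mono (Icc_subset_Ici_self)).intervalIntegrable_of_Icc hαt
  have hgsplit : (∫ τ in t0..β, g τ) - ∫ τ in t0..α, g τ = ∫ τ in α..β, g τ :=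
    intervalIntegral.integral_interval_sub_left hgintβ hgintα
  -- finish
  have hM0 : 0 ≤ max (g α) (g β) := le_trans hgα (le_max_left _ _)
  have hMℓ : 0 ≤ max (g α) (g β) / ℓ := div_nonneg hM0 hℓ.le
  have hIle : I ≤ max (g α) (g β) / ℓ := le_trans (le_abs_self I) hIbound
  have heq : (1 / ℓ) * max (g α) (g β) = max (g α) (g β) / ℓ := by ring
  rw [hgsplit, hmain, heq]
  linarith
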